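/- Let U be decomposable of type (𝐤,𝐧) in 𝕍(k,q^m), with k_i < n_i for all i ∈ {1,…,t}, and with components U_1,…,U_t and F_i = ⟨U_i⟩_{𝔽_{q^m}}. Then U is 𝐤-scattered with respect to the hyperplanes if and only if the only 𝔽_{q^m}-subspaces of 𝕍(k,q^m) having positive defect with respect to U and minimal with respect to their defect are exactly the subspaces that are sums of some of the components F_i, i ∈ {1,…,t}. -/

import Mathlib

open Module Submodule

section GenericHelpers

variable {R W : Type*} [Field R] [AddCommGroup W] [Module R W] [FiniteDimensional R W]

lemma aux_finrank_sup_span (p : Submodule R W) {y : W} (hy : y ∉ p) :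
    finrank R ↥(p ⊔ Submodule.span R {y}) = finrank R ↥p + 1 := by
  have hy0 : y ≠ 0 := fun h => hy (h ▸ p.zero_mem)
  have hlt : p < p ⊔ Submodule.span R {y} := by
    refine lt_of_le_of_ne le_sup_left (fun h => hy ?_)
    have : y ∈ p ⊔ Submodule.span R {y} :=
      (le_sup_right : Submodule.span R {y} ≤ _) (Submodule.mem_span_singleton_self y)
    rwa [← h] at this
  have h1 : finrank R ↥p < finrank R ↥(p ⊔ Submodule.span R {y}) :=
    Submodule.finrank_lt_finrank_of_lt hlt
  have h2 : finrank R ↥(p ⊔ Submodule.span R {y}) + finrank R ↥(p ⊓ Submodule.span R {y})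
      = finrank R ↥p + finrank R ↥(Submodule.span R {y}) :=
    Submodule.finrank_sup_add_finrank_inf_eq p (Submodule.span R {y})
  have h3 : finrank R ↥(Submodule.span R ({y} : Set W)) = 1 := finrank_span_singleton hy0
  omega

lemma aux_finrank_sup_disjoint (p q : Submodule R W) (h : Disjoint p q) :
    finrank R ↥(p ⊔ q) = finrank R ↥p + finrank R ↥q := by
  have h2 := Submodule.finrank_sup_add_finrank_inf_eq p q
  rw [disjoint_iff.mp h] at h2
  simpa using h2

lemma aux_finrank_map_add (f : W →ₗ[R] W) (p : Submodule R W) :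
    finrank R ↥(p.map f) + finrank R ↥(p ⊓ LinearMap.ker f) = finrank R ↥p := by
  have h := LinearMap.finrank_range_add_finrank_ker (f.domRestrict p)
  rw [LinearMap.range_domRestrict, LinearMap.ker_domRestrict] at h
  have e1 : Submodule.comap p.subtype (LinearMap.ker f)
      = Submodule.comap p.subtype (p ⊓ LinearMap.ker f) := by
    ext x; simp [x.2]
  have e2 : finrank R ↥(Submodule.comap p.subtype (p ⊓ LinearMap.ker f))
      = finrank R ↥(p ⊓ LinearMap.ker f) :=
    (Submodule.comapSubtypeEquivOfLe inf_le_left).finrank_eq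
  rw [e1, e2] at h
  exact h

end GenericHelpers

open Module Submodule

section BSup

variable {ι α : Type*} [CompleteLattice α]

/-- Supremum of a family over a finite index set. -/
def bSup (f : ι → α) (s : Finset ι) : α := ⨆ i ∈ s, f i

lemma le_bSup (f : ι → α) {s : Finset ι} {i : ι} (hi : i ∈ s) : f i ≤ bSup f s :=
  le_iSup₂ (f := fun i (_ : i ∈ s) => f i) i hi

lemma bSup_le {f : ι → α} {s : Finset ι} {x : α} (h : ∀ i ∈ s, f i ≤ x) : bSup f s ≤ x :=
  iSup₂_le h

lemma bSup_mono_set (f : ι → α) {s s' : Finset ι} (h : s ⊆ s') : bSup f s ≤ bSup f s' :=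
  bSup_le fun i hi => le_bSup f (h hi)

variable [DecidableEq ι]

lemma bSup_union (f : ι → α) (s s' : Finset ι) : bSup f (s ∪ s') = bSup f s ⊔ bSup f s' :=
  Finset.iSup_union

lemma bSup_insert (f : ι → α) (a : ι) (s : Finset ι) :
    bSup f (insert a s) = f a ⊔ bSup f s := Finset.iSup_insert a s f

lemma bSup_singleton (f : ι → α) (a : ι) : bSup f {a} = f a := by
  simp [bSup]

lemma bSup_empty (f : ι → α) : bSup f (∅ : Finset ι) = ⊥ := by
  simp [bSup]

lemma bSup_univ [Fintype ι] (f : ι → α) : bSup f Finset.univ = ⨆ i, f i := by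
  simp [bSup]

lemma iSupIndep.disjoint_bSup {f : ι → α} (hf : iSupIndep f) {i : ι} {s : Finset ι}
    (hi : i ∉ s) : Disjoint (f i) (bSup f s) := by
  refine Disjoint.mono_right ?_ (hf i)
  exact bSup_le fun j hj => le_iSup₂ (f := fun j (_ : j ≠ i) => f j) j
    (by rintro rfl; exact hi hj)

variable [IsModularLattice α]

lemma iSupIndep.disjoint_bSup_bSup {f : ι → α} (hf : iSupIndep f) :
    ∀ {s s' : Finset ι}, Disjoint s s' → Disjoint (bSup f s) (bSup f s') := by
  intro s
  induction s using Finset.induction_on with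
  | empty => intro s' _; simp [bSup_empty]
  | @insert a s ha IH =>
      intro s' hd
      have has' : a ∉ s' := fun h => (Finset.disjoint_left.mp hd) (Finset.mem_insert_self a s) h
      have hss' : Disjoint s s' :=
        Finset.disjoint_left.mpr fun {x} hx => Finset.disjoint_left.mp hd
          (Finset.mem_insert_of_mem hx)
      rw [bSup_insert]
      refine Disjoint.disjoint_sup_left_of_disjoint_sup_right (IH hss') ?_
      rw [← bSup_union]
      exact hf.disjoint_bSup (by simp [ha, has'])

end BSup

section Config

variable {K L V : Type*} [Field K] [Field L] [Algebra K L]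
  [AddCommGroup V] [Module K V] [Module L V] [IsScalarTower K L V]
  [FiniteDimensional K V] [FiniteDimensional L V]
  {t : ℕ} {ks ns : Fin t → ℕ} {F : Fin t → Submodule L V} {Us : Fin t → Submodule K V}
  {U : Submodule K V}

lemma US_le_FS (hF : ∀ i, F i = Submodule.span L (Us i : Set V)) (s : Finset (Fin t)) :
    bSup Us s ≤ (bSup F s).restrictScalars K := by
  refine bSup_le fun i hi x hx => ?_
  have h1 : x ∈ F i := by rw [hF i]; exact Submodule.subset_span hx
  exact le_bSup F hi h1

lemma US_le_U (hUsup : (⨆ i, Us i) = U) (s : Finset (Fin t)) : bSup Us s ≤ U :=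
  bSup_le fun i _ => hUsup ▸ le_iSup Us i

lemma span_US (hF : ∀ i, F i = Submodule.span L (Us i : Set V)) (s : Finset (Fin t)) :
    Submodule.span L (↑(bSup Us s) : Set V) = bSup F s := by
  apply le_antisymm
  · rw [Submodule.span_le]
    exact fun x hx => US_le_FS hF s hx
  · refine bSup_le fun i hi => ?_
    rw [hF i]
    exact Submodule.span_mono fun x hx => le_bSup Us hi hx

lemma finrank_bSup {R W : Type*} [Field R] [AddCommGroup W] [Module R W]
    [FiniteDimensional R W] {ι : Type*} [DecidableEq ι] {g : ι → Submodule R W}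
    (hg : iSupIndep g) (s : Finset ι) :
    finrank R ↥(bSup g s) = ∑ i ∈ s, finrank R ↥(g i) := by
  induction s using Finset.induction_on with
  | empty => simp [bSup_empty]
  | @insert a s ha IH =>
      rw [bSup_insert, aux_finrank_sup_disjoint _ _ (hg.disjoint_bSup ha), IH,
        Finset.sum_insert ha]

lemma U_inf_FS (hF : ∀ i, F i = Submodule.span L (Us i : Set V)) (hFindep : iSupIndep F)
    (hUsup : (⨆ i, Us i) = U) (s : Finset (Fin t)) :
    U ⊓ (bSup F s).restrictScalars K = bSup Us s := by
  apply le_antisymm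
  · rintro x ⟨hxU, hxF⟩
    have hxF' : x ∈ bSup F s := hxF
    have hsplit : bSup Us s ⊔ bSup Us (Finset.univ \ s) = U := by
      rw [← bSup_union, Finset.union_sdiff_of_subset (Finset.subset_univ s), bSup_univ, hUsup]
    rcases Submodule.mem_sup.mp (hsplit ▸ hxU) with ⟨a, ha, b, hb, hab⟩
    have hbF2 : b ∈ bSup F (Finset.univ \ s) := US_le_FS hF _ hb
    have haF : a ∈ bSup F s := US_le_FS hF s ha
    have hbF1 : b ∈ bSup F s := by
      have hbeq : b = x - a := eq_sub_of_add_eq' hab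
      rw [hbeq]; exact sub_mem hxF' haF
    have hb0 : b = 0 :=
      Submodule.disjoint_def.mp (hFindep.disjoint_bSup_bSup Finset.disjoint_sdiff) b hbF1 hbF2
    have : x = a := by rw [← hab, hb0, add_zero]
    rw [this]; exact ha
  · exact le_inf (US_le_U hUsup s) (US_le_FS hF s)

lemma U_inf_eq (hF : ∀ i, F i = Submodule.span L (Us i : Set V)) (hFindep : iSupIndep F)
    (hUsup : (⨆ i, Us i) = U) {s : Finset (Fin t)} {T : Submodule L V} (hT : T ≤ bSup F s) :
    U ⊓ T.restrictScalars K = bSup Us s ⊓ T.restrictScalars K := by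
  ext x
  simp only [Submodule.mem_inf, Submodule.restrictScalars_mem]
  constructor
  · rintro ⟨h1, h2⟩
    refine ⟨?_, h2⟩
    have hx : x ∈ U ⊓ (bSup F s).restrictScalars K := ⟨h1, hT h2⟩
    rw [U_inf_FS hF hFindep hUsup s] at hx
    exact hx
  · rintro ⟨h1, h2⟩
    exact ⟨US_le_U hUsup s h1, h2⟩

lemma combo (hF : ∀ i, F i = Submodule.span L (Us i : Set V)) (hFindep : iSupIndep F)
    {a b : Finset (Fin t)} (hab : Disjoint a b)
    {A B : Submodule L V} (hA : A ≤ bSup F a) (hB : B ≤ bSup F b)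
    {va vb : V} (hvaU : va ∈ bSup Us a) (hvaA : va ∉ A)
    (hvbU : vb ∈ bSup Us b) (hvbB : vb ∉ B) :
    A ⊔ B ⊔ Submodule.span L {va + vb} ≤ bSup F (a ∪ b) ∧
    finrank L ↥(A ⊔ B ⊔ Submodule.span L {va + vb}) = finrank L ↥A + finrank L ↥B + 1 ∧
    (∀ j ∈ a, ¬ F j ≤ A → ¬ F j ≤ A ⊔ B ⊔ Submodule.span L {va + vb}) ∧
    (∀ j ∈ b, ¬ F j ≤ B → ¬ F j ≤ A ⊔ B ⊔ Submodule.span L {va + vb}) ∧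
    finrank K ↥(bSup Us a ⊓ A.restrictScalars K) + finrank K ↥(bSup Us b ⊓ B.restrictScalars K)
        + 1
      ≤ finrank K ↥(bSup Us (a ∪ b) ⊓
          (A ⊔ B ⊔ Submodule.span L {va + vb}).restrictScalars K) := by
  have hdF : Disjoint (bSup F a) (bSup F b) := hFindep.disjoint_bSup_bSup hab
  have hvaF : va ∈ bSup F a := US_le_FS hF a hvaU
  have hvbF : vb ∈ bSup F b := US_le_FS hF b hvbU
  have hnotin : va + vb ∉ A ⊔ B := by
    intro h
    rcases Submodule.mem_sup.mp h with ⟨x, hx, y, hy, hxy⟩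
    have h1 : va - x ∈ bSup F a := sub_mem hvaF (hA hx)
    have heq : va - x = y - vb := by
      rw [sub_eq_sub_iff_add_eq_add, ← hxy]; abel
    have h2 : va - x ∈ bSup F b := by
      rw [heq]; exact sub_mem (hB hy) hvbF
    have h0 : va = x := by
      have := Submodule.disjoint_def.mp hdF _ h1 h2
      rwa [sub_eq_zero] at this
    exact hvaA (h0 ▸ hx)
  refine ⟨?_, ?_, ?_, ?_, ?_⟩
  · refine sup_le (sup_le (hA.trans (bSup_mono_set F Finset.subset_union_left))
      (hB.trans (bSup_mono_set F Finset.subset_union_right))) ?_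
    rw [Submodule.span_le, Set.singleton_subset_iff]
    exact add_mem (bSup_mono_set F Finset.subset_union_left hvaF)
      (bSup_mono_set F Finset.subset_union_right hvbF)
  · rw [aux_finrank_sup_span _ hnotin, aux_finrank_sup_disjoint A B (hdF.mono hA hB)]
  · intro j hja hjA hle
    apply hjA
    intro v hv
    have hv' := hle hv
    rcases Submodule.mem_sup.mp hv' with ⟨x, hx, w, hw, hxw⟩
    rcases Submodule.mem_span_singleton.mp hw with ⟨α, rfl⟩
    rcases Submodule.mem_sup.mp hx with ⟨xa, hxa, xb, hxb, rfl⟩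
    have hz1 : v - xa - α • va ∈ bSup F a :=
      sub_mem (sub_mem (le_bSup F hja hv) (hA hxa)) (Submodule.smul_mem _ _ hvaF)
    have hzeq : v - xa - α • va = xb + α • vb := by
      rw [← hxw, smul_add]; abel
    have hz2 : v - xa - α • va ∈ bSup F b := by
      rw [hzeq]; exact add_mem (hB hxb) (Submodule.smul_mem _ _ hvbF)
    have hz0 : xb + α • vb = 0 := by
      rw [← hzeq]; exact Submodule.disjoint_def.mp hdF _ hz1 hz2
    by_cases hα : α = 0
    · have hxb0 : xb = 0 := by simpa [hα] using hz0
      have hveq : v = xa := by rw [← hxw, hα, hxb0]; simp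
      rw [hveq]; exact hxa
    · exfalso
      apply hvbB
      have hvb' : vb = -(α⁻¹ • xb) := by
        have h5 : α • vb = -xb := eq_neg_of_add_eq_zero_right hz0
        calc vb = α⁻¹ • (α • vb) := by rw [smul_smul, inv_mul_cancel₀ hα, one_smul]
          _ = α⁻¹ • (-xb) := by rw [h5]
          _ = -(α⁻¹ • xb) := smul_neg _ _
      rw [hvb']
      exact neg_mem (Submodule.smul_mem B _ hxb)
  · intro j hjb hjB hle
    apply hjB
    intro v hv
    have hv' := hle hv
    rcases Submodule.mem_sup.mp hv' with ⟨x, hx, w, hw, hxw⟩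
    rcases Submodule.mem_span_singleton.mp hw with ⟨α, rfl⟩
    rcases Submodule.mem_sup.mp hx with ⟨xa, hxa, xb, hxb, rfl⟩
    have hz1 : v - xb - α • vb ∈ bSup F b :=
      sub_mem (sub_mem (le_bSup F hjb hv) (hB hxb)) (Submodule.smul_mem _ _ hvbF)
    have hzeq : v - xb - α • vb = xa + α • va := by
      rw [← hxw, smul_add]; abel
    have hz2 : v - xb - α • vb ∈ bSup F a := by
      rw [hzeq]; exact add_mem (hA hxa) (Submodule.smul_mem _ _ hvaF)
    have hz0 : xa + α • va = 0 := by
      rw [← hzeq]; exact Submodule.disjoint_def.mp hdF _ hz2 hz1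
    by_cases hα : α = 0
    · have hxa0 : xa = 0 := by simpa [hα] using hz0
      have hveq : v = xb := by rw [← hxw, hα, hxa0]; simp
      rw [hveq]; exact hxb
    · exfalso
      apply hvaA
      have hva' : va = -(α⁻¹ • xa) := by
        have h5 : α • va = -xa := eq_neg_of_add_eq_zero_right hz0
        calc va = α⁻¹ • (α • va) := by rw [smul_smul, inv_mul_cancel₀ hα, one_smul]
          _ = α⁻¹ • (-xa) := by rw [h5]
          _ = -(α⁻¹ • xa) := smul_neg _ _
      rw [hva']
      exact neg_mem (Submodule.smul_mem A _ hxa)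
  · set C := A ⊔ B ⊔ Submodule.span L {va + vb} with hCdef
    set p1 := bSup Us a ⊓ A.restrictScalars K with hp1
    set p2 := bSup Us b ⊓ B.restrictScalars K with hp2
    have hd12 : Disjoint p1 p2 := by
      rw [Submodule.disjoint_def]
      intro x h1 h2
      exact Submodule.disjoint_def.mp hdF x
        (US_le_FS hF a (Submodule.mem_inf.mp h1).1)
        (US_le_FS hF b (Submodule.mem_inf.mp h2).1)
    have hsle : p1 ⊔ p2 ≤ (A ⊔ B).restrictScalars K := by
      refine sup_le (le_trans inf_le_right fun x hx => ?_) (le_trans inf_le_right fun x hx => ?_)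
      · exact (le_sup_left : A ≤ A ⊔ B) hx
      · exact (le_sup_right : B ≤ A ⊔ B) hx
    have hnotin2 : va + vb ∉ p1 ⊔ p2 := fun h => hnotin (hsle h)
    have hfr : finrank K ↥(p1 ⊔ p2 ⊔ Submodule.span K {va + vb})
        = finrank K ↥p1 + finrank K ↥p2 + 1 := by
      rw [aux_finrank_sup_span _ hnotin2, aux_finrank_sup_disjoint _ _ hd12]
    have hXle : p1 ⊔ p2 ⊔ Submodule.span K {va + vb}
        ≤ bSup Us (a ∪ b) ⊓ C.restrictScalars K := by
      refine sup_le (sup_le ?_ ?_) ?_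
      · refine le_inf (inf_le_left.trans (bSup_mono_set Us Finset.subset_union_left))
          (inf_le_right.trans fun x hx => ?_)
        exact (le_sup_left.trans (le_sup_left : A ⊔ B ≤ C) : A ≤ C) hx
      · refine le_inf (inf_le_left.trans (bSup_mono_set Us Finset.subset_union_right))
          (inf_le_right.trans fun x hx => ?_)
        exact (le_sup_right.trans (le_sup_left : A ⊔ B ≤ C) : B ≤ C) hx
      · rw [Submodule.span_le, Set.singleton_subset_iff]
        refine Submodule.mem_inf.mpr ⟨?_, ?_⟩
        · exact add_mem (bSup_mono_set Us Finset.subset_union_left hvaU)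
            (bSup_mono_set Us Finset.subset_union_right hvbU)
        · exact (le_sup_right : Submodule.span L {va + vb} ≤ C)
            (Submodule.mem_span_singleton_self _)
    rw [← hfr]
    exact Submodule.finrank_mono hXle

lemma greedy (Y : Submodule K V) :
    ∀ d, d ≤ finrank L ↥(Submodule.span L (Y : Set V)) →
    ∃ M : Submodule L V, M ≤ Submodule.span L (Y : Set V) ∧ finrank L ↥M = d ∧
      d ≤ finrank K ↥(Y ⊓ M.restrictScalars K) := by
  intro d
  induction d with
  | zero => exact fun _ => ⟨⊥, bot_le, finrank_bot L V, by simp⟩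
  | succ d IH =>
      intro hd
      obtain ⟨M, hMle, hMrank, hMwt⟩ := IH (Nat.le_of_succ_le hd)
      have hns : ¬ ((Y : Set V) ⊆ M) := by
        intro hsub
        have : Submodule.span L (Y : Set V) ≤ M := Submodule.span_le.mpr hsub
        have := Submodule.finrank_mono this
        omega
      obtain ⟨y, hyY, hyM⟩ := Set.not_subset.mp hns
      have hyM' : y ∉ M := hyM
      refine ⟨M ⊔ Submodule.span L {y}, ?_, ?_, ?_⟩
      · refine sup_le hMle ?_
        rw [Submodule.span_le, Set.singleton_subset_iff]
        exact Submodule.subset_span hyY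
      · rw [aux_finrank_sup_span M hyM', hMrank]
      · have hyI : y ∉ Y ⊓ M.restrictScalars K := fun h => hyM' (Submodule.mem_inf.mp h).2
        have h1 : (Y ⊓ M.restrictScalars K) ⊔ Submodule.span K {y}
            ≤ Y ⊓ (M ⊔ Submodule.span L {y}).restrictScalars K := by
          refine sup_le (le_inf inf_le_left (inf_le_right.trans fun x hx =>
            (le_sup_left : M ≤ _) hx)) ?_
          rw [Submodule.span_le, Set.singleton_subset_iff]
          refine Submodule.mem_inf.mpr ⟨hyY, ?_⟩
          exact (le_sup_right : Submodule.span L {y} ≤ _) (Submodule.mem_span_singleton_self y)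
        have h2 := aux_finrank_sup_span (Y ⊓ M.restrictScalars K) hyI
        have h3 := Submodule.finrank_mono h1
        omega

lemma gadget_single (hks : ∀ i, 0 < ks i)
    (hF : ∀ i, F i = Submodule.span L (Us i : Set V))
    (hFdim : ∀ i, finrank L ↥(F i) = ks i) (j : Fin t) :
    ∃ N : Submodule L V, N ≤ F j ∧ finrank L ↥N + 1 = ks j ∧ ¬ F j ≤ N ∧
      ks j ≤ finrank K ↥(Us j ⊓ N.restrictScalars K) + 1 := by
  have hspan : Submodule.span L ((Us j : Set V)) = F j := (hF j).symm
  have hrk : finrank L ↥(Submodule.span L ((Us j : Set V))) = ks j := by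
    rw [hspan]; exact hFdim j
  obtain ⟨M, hMle, hMrank, hMwt⟩ := greedy (L := L) (Us j) (ks j - 1) (by rw [hrk]; omega)
  rw [hspan] at hMle
  have hne : ¬ F j ≤ M := by
    intro h
    have := Submodule.finrank_mono h
    rw [hFdim j, hMrank] at this
    have := hks j
    omega
  exact ⟨M, hMle, by have := hks j; omega, hne, by omega⟩

lemma gadget (hks : ∀ i, 0 < ks i)
    (hF : ∀ i, F i = Submodule.span L (Us i : Set V))
    (hFdim : ∀ i, finrank L ↥(F i) = ks i) (hFindep : iSupIndep F) :
    ∀ (D : Finset (Fin t)), D.Nonempty →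
    ∃ N : Submodule L V, N ≤ bSup F D ∧ finrank L ↥N + 1 = ∑ i ∈ D, ks i ∧
      (∀ j ∈ D, ¬ F j ≤ N) ∧
      ∑ i ∈ D, ks i ≤ finrank K ↥(bSup Us D ⊓ N.restrictScalars K) + 1 := by
  intro D hD
  induction hD using Finset.Nonempty.cons_induction with
  | singleton j =>
      obtain ⟨N, hNle, hNrank, hNne, hNwt⟩ := gadget_single hks hF hFdim j
      refine ⟨N, ?_, ?_, ?_, ?_⟩
      · rw [bSup_singleton]; exact hNle
      · rw [Finset.sum_singleton]; exact hNrank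
      · intro j' hj'; rw [Finset.mem_singleton] at hj'; subst hj'; exact hNne
      · rw [Finset.sum_singleton, bSup_singleton]; exact hNwt
  | cons a s ha hs IH =>
      obtain ⟨N', hN'le, hN'rank, hN'ne, hN'wt⟩ := IH
      obtain ⟨Na, hNale, hNarank, hNane, hNawt⟩ := gadget_single hks hF hFdim a
      have hsum_pos : 0 < ∑ i ∈ s, ks i := Finset.sum_pos (fun i _ => hks i) hs
      -- pick u' ∈ bSup Us s, u' ∉ N'
      have hUs_nle : ¬ (bSup Us s ≤ N'.restrictScalars K) := by
        intro h
        have h2 : bSup F s ≤ N' := by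
          rw [← span_US hF s]
          exact Submodule.span_le.mpr fun x hx => h hx
        have h3 := Submodule.finrank_mono h2
        rw [finrank_bSup hFindep] at h3
        have h4 : ∑ i ∈ s, finrank L ↥(F i) = ∑ i ∈ s, ks i :=
          Finset.sum_congr rfl fun i _ => hFdim i
        omega
      obtain ⟨u', hu'U, hu'N⟩ := SetLike.not_le_iff_exists.mp hUs_nle
      have hu'N' : u' ∉ N' := hu'N
      have hUa_nle : ¬ (Us a ≤ Na.restrictScalars K) := by
        intro h
        have h2 : F a ≤ Na := by
          rw [hF a]
          exact Submodule.span_le.mpr fun x hx => h hx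
        exact hNane h2
      obtain ⟨ua, huaU, huaN⟩ := SetLike.not_le_iff_exists.mp hUa_nle
      have huaN' : ua ∉ Na := huaN
      have hdisj : Disjoint s ({a} : Finset (Fin t)) := by
        simp [Finset.disjoint_singleton_right, ha]
      have hNale' : Na ≤ bSup F ({a} : Finset (Fin t)) := by
        rw [bSup_singleton]; exact hNale
      have huaU' : ua ∈ bSup Us ({a} : Finset (Fin t)) := by
        rw [bSup_singleton]; exact huaU
      obtain ⟨hCle, hCrank, hCfreeA, hCfreeB, hCwt⟩ :=
        combo hF hFindep hdisj hN'le hNale' hu'U hu'N' huaU' huaN'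
      have hunion : s ∪ ({a} : Finset (Fin t)) = Finset.cons a s ha := by
        rw [Finset.cons_eq_insert, Finset.insert_eq, Finset.union_comm]
      rw [hunion] at hCle hCwt
      refine ⟨N' ⊔ Na ⊔ Submodule.span L {u' + ua}, hCle, ?_, ?_, ?_⟩
      · rw [hCrank, Finset.sum_cons]
        omega
      · intro j hj
        rcases Finset.mem_cons.mp hj with rfl | hj'
        · exact hCfreeB j (Finset.mem_singleton_self j) hNane
        · exact hCfreeA j hj' (hN'ne j hj')
      · rw [Finset.sum_cons]
        have h5 : finrank K ↥(bSup Us s ⊓ N'.restrictScalars K)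
            + finrank K ↥(bSup Us ({a} : Finset (Fin t)) ⊓ Na.restrictScalars K) + 1
            ≤ finrank K ↥(bSup Us (Finset.cons a s ha)
                ⊓ (N' ⊔ Na ⊔ Submodule.span L {u' + ua}).restrictScalars K) := hCwt
        rw [bSup_singleton] at h5
        omega

lemma FS_inf (hFindep : iSupIndep F) {a b : Finset (Fin t)} :
    bSup F a ⊓ bSup F b ≤ bSup F (a ∩ b) := by
  rintro x ⟨hxa, hxb⟩
  have hsplit : bSup F (a ∩ b) ⊔ bSup F (a \ b) = bSup F a := by
    rw [← bSup_union]
    congr 1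
    rw [Finset.union_comm]
    exact Finset.sdiff_union_inter a b
  rcases Submodule.mem_sup.mp (hsplit ▸ hxa) with ⟨u, hu, v, hv, rfl⟩
  have hv2 : v ∈ bSup F b := by
    have heq : v = (u + v) - u := by abel
    rw [heq]
    exact sub_mem hxb (bSup_mono_set F Finset.inter_subset_right hu)
  have hv0 : v = 0 :=
    Submodule.disjoint_def.mp (hFindep.disjoint_bSup_bSup Finset.sdiff_disjoint) v hv hv2
  rw [hv0, add_zero]
  exact hu

lemma crit (hks : ∀ i, 0 < ks i)
    (hF : ∀ i, F i = Submodule.span L (Us i : Set V)) (hFindep : iSupIndep F)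
    (hUsup : (⨆ i, Us i) = U) (hFdim : ∀ i, finrank L ↥(F i) = ks i)
    {k : ℕ} (hk : k = ∑ i, ks i)
    (hyp2 : ∀ H : Submodule L V, finrank L ↥H + 1 = k → (∀ i, ¬ F i ≤ H) →
      finrank K ↥(U ⊓ H.restrictScalars K) ≤ k - 1)
    {c : Finset (Fin t)} (hc : c.Nonempty)
    {H : Submodule L V} (hHle : H ≤ bSup F c) (hHfree : ∀ j ∈ c, ¬ F j ≤ H)
    (hHrank : finrank L ↥H + 1 = ∑ i ∈ c, ks i) :
    finrank K ↥(U ⊓ H.restrictScalars K) + 1 ≤ ∑ i ∈ c, ks i := by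
  by_contra hcon
  push_neg at hcon
  have hsum_pos : 0 < ∑ i ∈ c, ks i := Finset.sum_pos (fun i _ => hks i) hc
  -- pick u_c ∈ bSup Us c, u_c ∉ H
  have hfrc : finrank L ↥(bSup F c) = ∑ i ∈ c, ks i := by
    rw [finrank_bSup hFindep]; exact Finset.sum_congr rfl fun i _ => hFdim i
  have hnle : ¬ (bSup Us c ≤ H.restrictScalars K) := by
    intro h
    have h2 : bSup F c ≤ H := by
      rw [← span_US hF c]; exact Submodule.span_le.mpr fun x hx => h hx
    have h3 := Submodule.finrank_mono h2
    omega
  obtain ⟨uc, hucU, hucH⟩ := SetLike.not_le_iff_exists.mp hnle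
  have hucH' : uc ∉ H := hucH
  by_cases hcuniv : c = Finset.univ
  · subst hcuniv
    have h4 := hyp2 H (by rw [hk]; exact hHrank) (fun i => hHfree i (Finset.mem_univ i))
    have : k = ∑ i ∈ Finset.univ, ks i := hk
    omega
  · set D := Finset.univ \ c with hDdef
    have hD : D.Nonempty := by
      rw [hDdef, Finset.sdiff_nonempty]
      intro h
      exact hcuniv (le_antisymm (Finset.subset_univ c) h)
    obtain ⟨N, hNle, hNrank, hNfree, hNwt⟩ := gadget hks hF hFdim hFindep D hD
    have hsumD_pos : 0 < ∑ i ∈ D, ks i := Finset.sum_pos (fun i _ => hks i) hD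
    have hfrD : finrank L ↥(bSup F D) = ∑ i ∈ D, ks i := by
      rw [finrank_bSup hFindep]; exact Finset.sum_congr rfl fun i _ => hFdim i
    have hnleD : ¬ (bSup Us D ≤ N.restrictScalars K) := by
      intro h
      have h2 : bSup F D ≤ N := by
        rw [← span_US hF D]; exact Submodule.span_le.mpr fun x hx => h hx
      have h3 := Submodule.finrank_mono h2
      omega
    obtain ⟨uD, huDU, huDN⟩ := SetLike.not_le_iff_exists.mp hnleD
    have huDN' : uD ∉ N := huDN
    have hdisj : Disjoint c D := Finset.disjoint_sdiff
    obtain ⟨hCle, hCrank, hCfreeA, hCfreeB, hCwt⟩ :=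
      combo hF hFindep hdisj hHle hNle hucU hucH' huDU huDN'
    set C := H ⊔ N ⊔ Submodule.span L {uc + uD} with hCdef
    have hunion : c ∪ D = Finset.univ := by
      rw [hDdef, Finset.union_sdiff_of_subset (Finset.subset_univ c)]
    have hsplit : ∑ i ∈ D, ks i + ∑ i ∈ c, ks i = ∑ i ∈ Finset.univ, ks i :=
      Finset.sum_sdiff (Finset.subset_univ c)
    have hCrank' : finrank L ↥C + 1 = k := by
      rw [hCrank, hk]
      omega
    have hCfree : ∀ i, ¬ F i ≤ C := by
      intro i
      by_cases hi : i ∈ c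
      · exact hCfreeA i hi (hHfree i hi)
      · exact hCfreeB i (by rw [hDdef, Finset.mem_sdiff]; exact ⟨Finset.mem_univ i, hi⟩)
          (hNfree i (by rw [hDdef, Finset.mem_sdiff]; exact ⟨Finset.mem_univ i, hi⟩))
    have hwtC := hyp2 C hCrank' hCfree
    have hUuniv : bSup Us (c ∪ D) = U := by
      rw [hunion, bSup_univ, hUsup]
    rw [hUuniv] at hCwt
    have hUcH : U ⊓ H.restrictScalars K = bSup Us c ⊓ H.restrictScalars K :=
      U_inf_eq hF hFindep hUsup hHle
    rw [← hUcH] at hCwt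
    omega

lemma concl (hks : ∀ i, 0 < ks i)
    (hF : ∀ i, F i = Submodule.span L (Us i : Set V)) (hFindep : iSupIndep F)
    (hFsup : (⨆ i, F i) = ⊤) (hUsup : (⨆ i, Us i) = U)
    (hFdim : ∀ i, finrank L ↥(F i) = ks i)
    {k : ℕ} (hk : k = ∑ i, ks i)
    (hyp2 : ∀ H : Submodule L V, finrank L ↥H + 1 = k → (∀ i, ¬ F i ≤ H) →
      finrank K ↥(U ⊓ H.restrictScalars K) ≤ k - 1) :
    ∀ (c : Finset (Fin t)) (T : Submodule L V), T ≤ bSup F c → (∀ j ∈ c, ¬ F j ≤ T) →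
      finrank K ↥(U ⊓ T.restrictScalars K) ≤ finrank L ↥T := by
  intro c
  induction c using Finset.strongInduction with
  | _ c IH =>
  intro T hTle hTfree
  rcases Finset.eq_empty_or_nonempty c with rfl | hc
  · have hbot : T = ⊥ := le_bot_iff.mp (by rw [bSup_empty] at hTle; exact hTle)
    subst hbot
    rw [Submodule.restrictScalars_bot, inf_bot_eq]
    simp
  · have hfrc : finrank L ↥(bSup F c) = ∑ i ∈ c, ks i := by
      rw [finrank_bSup hFindep]; exact Finset.sum_congr rfl fun i _ => hFdim i
    have key : ∀ μ (T' : Submodule L V), T' ≤ bSup F c → (∀ j ∈ c, ¬ F j ≤ T') →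
        finrank L ↥T' + μ = ∑ i ∈ c, ks i →
        finrank K ↥(U ⊓ T'.restrictScalars K) ≤ finrank L ↥T' := by
      intro μ
      induction μ with
      | zero =>
          intro T' hle hfree hrank
          exfalso
          have heq : T' = bSup F c := Submodule.eq_of_le_of_finrank_le hle (by omega)
          obtain ⟨j, hj⟩ := hc
          exact hfree j hj (heq ▸ le_bSup F hj)
      | succ μ IHμ =>
          intro T' hle hfree hrank
          rcases Nat.eq_zero_or_pos μ with rfl | hμpos
          · have hcrit := crit hks hF hFindep hUsup hFdim hk hyp2 hc hle hfree (by omega)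
            omega
          · by_cases hbr : ∃ y, y ∈ bSup Us c ∧ y ∉ T' ∧
                ∀ j ∈ c, ¬ F j ≤ T' ⊔ Submodule.span L {y}
            · obtain ⟨y, hyU, hyT, hyfree⟩ := hbr
              have hyF : y ∈ bSup F c := US_le_FS hF c hyU
              have hT2le : T' ⊔ Submodule.span L {y} ≤ bSup F c := sup_le hle
                (by rw [Submodule.span_le, Set.singleton_subset_iff]; exact hyF)
              have hT2rank : finrank L ↥(T' ⊔ Submodule.span L {y}) = finrank L ↥T' + 1 :=
                aux_finrank_sup_span T' hyT
              have hres := IHμ (T' ⊔ Submodule.span L {y}) hT2le hyfree (by omega)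
              have hyU' : y ∈ U := US_le_U hUsup c hyU
              have hyI : y ∉ U ⊓ T'.restrictScalars K := fun h => hyT (Submodule.mem_inf.mp h).2
              have hsub : (U ⊓ T'.restrictScalars K) ⊔ Submodule.span K {y}
                  ≤ U ⊓ (T' ⊔ Submodule.span L {y}).restrictScalars K := by
                refine sup_le (le_inf inf_le_left (inf_le_right.trans fun x hx =>
                  (le_sup_left : T' ≤ _) hx)) ?_
                rw [Submodule.span_le, Set.singleton_subset_iff]
                exact Submodule.mem_inf.mpr ⟨hyU',
                  (le_sup_right : Submodule.span L {y} ≤ _) (Submodule.mem_span_singleton_self y)⟩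
              have h6 := aux_finrank_sup_span (U ⊓ T'.restrictScalars K) hyI
              have h7 := Submodule.finrank_mono hsub
              omega
            · push_neg at hbr
              have hnle : ¬ (bSup Us c ≤ T'.restrictScalars K) := by
                intro h
                have h2 : bSup F c ≤ T' := by
                  rw [← span_US hF c]; exact Submodule.span_le.mpr fun x hx => h hx
                obtain ⟨j, hj⟩ := hc
                exact hfree j hj ((le_bSup F hj).trans h2)
              obtain ⟨y0, hy0U, hy0T⟩ := SetLike.not_le_iff_exists.mp hnle
              have hy0T' : y0 ∉ T' := hy0T
              obtain ⟨i0, hi0c, hi0le⟩ := hbr y0 hy0U hy0T'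
              set T2 := T' ⊔ Submodule.span L {y0} with hT2def
              have hT2rank : finrank L ↥T2 = finrank L ↥T' + 1 := aux_finrank_sup_span T' hy0T'
              have hT2le : T2 ≤ bSup F c := sup_le hle
                (by rw [Submodule.span_le, Set.singleton_subset_iff]; exact US_le_FS hF c hy0U)
              classical
              set s := c.filter (fun j => F j ≤ T2) with hsdef
              have hi0s : i0 ∈ s := Finset.mem_filter.mpr ⟨hi0c, hi0le⟩
              have hssub : s ⊆ c := Finset.filter_subset _ c
              have hFs_le_T2 : bSup F s ≤ T2 := bSup_le fun j hj => (Finset.mem_filter.mp hj).2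
              have hsne : s ≠ c := by
                intro h
                have hcle : bSup F c ≤ T2 := h ▸ hFs_le_T2
                have heq : T2 = bSup F c := le_antisymm hT2le hcle
                rw [heq, hfrc] at hT2rank
                omega
              have hs_ssub : s ⊂ c := hssub.ssubset_of_ne hsne
              have hcs_ssub : c \ s ⊂ c := by
                refine (Finset.sdiff_subset).ssubset_of_ne ?_
                intro h
                have : i0 ∈ c \ s := h.symm ▸ hi0c
                rw [Finset.mem_sdiff] at this
                exact this.2 hi0s
              have hks_s : finrank L ↥(bSup F s) = ∑ i ∈ s, ks i := by
                rw [finrank_bSup hFindep]; exact Finset.sum_congr rfl fun i _ => hFdim i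
              set Ts := bSup F s ⊓ T' with hTsdef
              have hTs_le : Ts ≤ bSup F s := inf_le_left
              have hTs_free : ∀ j ∈ s, ¬ F j ≤ Ts := fun j hj h =>
                hfree j (hssub hj) (h.trans inf_le_right)
              have hTs_wt := IH s hs_ssub Ts hTs_le hTs_free
              have hTs_ne : Ts ≠ bSup F s := by
                intro h
                have h2 : bSup F s ≤ T' := by rw [← h]; exact inf_le_right
                exact hfree i0 hi0c ((le_bSup F hi0s).trans h2)
              have hTs_lt : finrank L ↥Ts < ∑ i ∈ s, ks i := by
                rw [← hks_s]
                exact Submodule.finrank_lt_finrank_of_lt (lt_of_le_of_ne hTs_le hTs_ne)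
              have hABle : (U ⊓ T'.restrictScalars K) ⊔ bSup Us s
                  ≤ U ⊓ T2.restrictScalars K := by
                refine sup_le (le_inf inf_le_left (inf_le_right.trans fun x hx =>
                  (le_sup_left : T' ≤ T2) hx)) (le_inf (US_le_U hUsup s) ?_)
                exact fun x hx => hFs_le_T2 (US_le_FS hF s hx)
              have hABinf : (U ⊓ T'.restrictScalars K) ⊓ bSup Us s
                  ≤ U ⊓ Ts.restrictScalars K := by
                rintro x ⟨⟨hxU, hxT⟩, hxs⟩
                exact ⟨hxU, Submodule.mem_inf.mpr ⟨US_le_FS hF s hxs, hxT⟩⟩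
              have hABeq := Submodule.finrank_sup_add_finrank_inf_eq
                (U ⊓ T'.restrictScalars K) (bSup Us s)
              have hAB1 := Submodule.finrank_mono hABle
              have hAB2 := Submodule.finrank_mono hABinf
              -- projection along bSup F s
              have hcompl : IsCompl (bSup F (Finset.univ \ s)) (bSup F s) := by
                constructor
                · exact hFindep.disjoint_bSup_bSup Finset.sdiff_disjoint
                · rw [codisjoint_iff, ← bSup_union]
                  have hu : (Finset.univ \ s) ∪ s = Finset.univ := by
                    rw [Finset.sdiff_union_self_eq_union]
                    exact Finset.union_eq_left.mpr (Finset.subset_univ s)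
                  rw [hu, bSup_univ, hFsup]
              set π : V →ₗ[L] V := (bSup F (Finset.univ \ s)).subtype.comp
                (Submodule.projectionOnto _ _ hcompl) with hπdef
              have hπ_left : ∀ x (hx : x ∈ bSup F (Finset.univ \ s)), π x = x := by
                intro x hx
                have h8 := Submodule.projectionOnto_apply_left hcompl ⟨x, hx⟩
                simp only [hπdef, LinearMap.coe_comp, Function.comp_apply]
                exact congrArg Subtype.val h8
              have hπ_right : ∀ x ∈ bSup F s, π x = 0 := by
                intro x hx
                have h8 := Submodule.projectionOnto_apply_of_mem_right hcompl hx
                simp only [hπdef, LinearMap.coe_comp, Function.comp_apply]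
                rw [h8]
                rfl
              have hπ_mem : ∀ x, π x ∈ bSup F (Finset.univ \ s) := by
                intro x
                simp only [hπdef, LinearMap.coe_comp, Function.comp_apply]
                exact (Submodule.projectionOnto _ _ hcompl x).2
              have hπ_sub : ∀ x, x - π x ∈ bSup F s := by
                intro x
                have hk0 : LinearMap.ker π = bSup F s := by
                  rw [hπdef, LinearMap.ker_comp, Submodule.ker_subtype]
                  exact Submodule.ker_projectionOnto hcompl
                rw [← hk0, LinearMap.mem_ker, map_sub, hπ_left (π x) (hπ_mem x), sub_self]
              have hπ_U : ∀ x ∈ U, π x ∈ U := by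
                intro x hx
                have hsplit : bSup Us s ⊔ bSup Us (Finset.univ \ s) = U := by
                  rw [← bSup_union, Finset.union_sdiff_of_subset (Finset.subset_univ s),
                    bSup_univ, hUsup]
                rcases Submodule.mem_sup.mp (hsplit ▸ hx) with ⟨a', ha', b', hb', rfl⟩
                rw [map_add, hπ_right a' (US_le_FS hF s ha'), hπ_left b' (US_le_FS hF _ hb'),
                  zero_add]
                exact US_le_U hUsup _ hb'
              set T3 := Submodule.map π T2 with hT3def
              have hT3_le_T2 : T3 ≤ T2 := by
                rintro x ⟨y, hy, rfl⟩
                have h8 : y - π y ∈ T2 := hFs_le_T2 (hπ_sub y)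
                have h9 : π y = y - (y - π y) := by abel
                rw [h9]
                exact sub_mem hy h8
              have hT3_le_cs : T3 ≤ bSup F (c \ s) := by
                have h9 : T3 ≤ bSup F (Finset.univ \ s) := by
                  rintro x ⟨y, hy, rfl⟩
                  exact hπ_mem y
                have h10 : T3 ≤ bSup F c := hT3_le_T2.trans hT2le
                have h11 : (Finset.univ \ s) ∩ c = c \ s := by
                  ext x; simp [Finset.mem_sdiff, Finset.mem_inter]; tauto
                exact fun x hx => h11 ▸ FS_inf hFindep ⟨h9 hx, h10 hx⟩
              have hT3_free : ∀ j ∈ c \ s, ¬ F j ≤ T3 := by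
                intro j hj h
                rw [Finset.mem_sdiff] at hj
                exact hj.2 (Finset.mem_filter.mpr ⟨hj.1, h.trans hT3_le_T2⟩)
              have hT3_wt := IH (c \ s) hcs_ssub T3 hT3_le_cs hT3_free
              -- L rank-nullity
              have hkerπ : LinearMap.ker π = bSup F s := by
                rw [hπdef, LinearMap.ker_comp, Submodule.ker_subtype]
                exact Submodule.ker_projectionOnto hcompl
              have hLrn := aux_finrank_map_add π T2
              have hinfq : T2 ⊓ LinearMap.ker π = bSup F s := by
                rw [hkerπ]
                exact inf_eq_right.mpr hFs_le_T2
              rw [hinfq, hks_s, ← hT3def] at hLrn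
              -- K rank-nullity
              have hKrn := aux_finrank_map_add (π.restrictScalars K)
                (U ⊓ T2.restrictScalars K)
              have hkerK : LinearMap.ker (π.restrictScalars K)
                  = (LinearMap.ker π).restrictScalars K := LinearMap.ker_restrictScalars K π
              have hinfK : (U ⊓ T2.restrictScalars K) ⊓ LinearMap.ker (π.restrictScalars K)
                  ≤ bSup Us s := by
                rw [← U_inf_FS hF hFindep hUsup s]
                rintro x ⟨⟨hxU, _⟩, hxk⟩
                refine ⟨hxU, ?_⟩
                rw [hkerK] at hxk
                have : x ∈ LinearMap.ker π := hxk
                rw [hkerπ] at this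
                exact this
              have hmapK : Submodule.map (π.restrictScalars K) (U ⊓ T2.restrictScalars K)
                  ≤ U ⊓ T3.restrictScalars K := by
                rintro x ⟨y, hy, rfl⟩
                obtain ⟨hyU, hyT⟩ := hy
                exact ⟨hπ_U y hyU, Submodule.mem_map_of_mem (f := π) hyT⟩
              have hK1 := Submodule.finrank_mono hinfK
              have hK2 := Submodule.finrank_mono hmapK
              omega
    exact key (∑ i ∈ c, ks i - finrank L ↥T) T hTle hTfree
      (by have := Submodule.finrank_mono hTle; omega)

end Config

/-- The weight of the `𝔽_{q^m}`-subspace `T` with respect to the `𝔽_q`-subspace `U`: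
`w_U(T) = dim_{𝔽_q}(U ∩ T)`. -/
noncomputable def wt {K L V : Type*} [Field K] [Field L] [Algebra K L]
    [AddCommGroup V] [Module K V] [Module L V] [IsScalarTower K L V]
    (U : Submodule K V) (T : Submodule L V) : ℕ :=
  Module.finrank K ↥(U ⊓ T.restrictScalars K)

/-- The defect of `T` with respect to `U`: `ε_U(T) = w_U(T) − dim_{𝔽_{q^m}}(T)`. -/
noncomputable def defect {K L V : Type*} [Field K] [Field L] [Algebra K L]
    [AddCommGroup V] [Module K V] [Module L V] [IsScalarTower K L V]
    (U : Submodule K V) (T : Submodule L V) : ℤ :=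
  (wt U T : ℤ) - Module.finrank L ↥T

/-- `ε_U(r)`: the maximum defect of `r`-dimensional `𝔽_{q^m}`-subspaces w.r.t. `U`. -/
noncomputable def maxDefect {K V : Type*} (L : Type*) [Field K] [Field L] [Algebra K L]
    [AddCommGroup V] [Module K V] [Module L V] [IsScalarTower K L V]
    (U : Submodule K V) (r : ℕ) : ℤ :=
  sSup {e : ℤ | ∃ T : Submodule L V, Module.finrank L ↥T = r ∧ e = defect U T}

/-- `T` is minimal with respect to its defect (w.r.t. `U`): every proper
`𝔽_{q^m}`-subspace of `T` has strictly smaller defect. -/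
def IsMinimalWrtDefect {K L V : Type*} [Field K] [Field L] [Algebra K L]
    [AddCommGroup V] [Module K V] [Module L V] [IsScalarTower K L V]
    (U : Submodule K V) (T : Submodule L V) : Prop :=
  ∀ T' : Submodule L V, T' < T → defect U T' < defect U T

section Config2

variable {K L V : Type*} [Field K] [Field L] [Algebra K L]
  [AddCommGroup V] [Module K V] [Module L V] [IsScalarTower K L V]
  [FiniteDimensional K V] [FiniteDimensional L V]
  {t : ℕ} {ks ns : Fin t → ℕ} {F : Fin t → Submodule L V} {Us : Fin t → Submodule K V}
  {U : Submodule K V}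

lemma defect_bot : defect U (⊥ : Submodule L V) = 0 := by
  simp only [defect, wt]
  rw [Submodule.restrictScalars_bot, inf_bot_eq]
  simp

lemma minexists (U : Submodule K V) (T : Submodule L V) (hpos : 0 < defect U T) :
    ∃ T', T' ≤ T ∧ 0 < defect U T' ∧ IsMinimalWrtDefect U T' := by
  have main : ∀ (d : ℕ) (T : Submodule L V), finrank L ↥T ≤ d → 0 < defect U T →
      ∃ T', T' ≤ T ∧ 0 < defect U T' ∧ IsMinimalWrtDefect U T' := by
    intro d
    induction d with
    | zero =>
        intro T h0 hpos
        have hT : T = ⊥ := by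
          rw [← Submodule.finrank_eq_zero (R := L)]
          omega
        rw [hT, defect_bot] at hpos
        exact absurd hpos (lt_irrefl 0)
    | succ d IHd =>
        intro T hd hpos
        by_cases hmin : IsMinimalWrtDefect U T
        · exact ⟨T, le_rfl, hpos, hmin⟩
        · rw [IsMinimalWrtDefect] at hmin
          push_neg at hmin
          obtain ⟨T'', hlt, hge⟩ := hmin
          have hr : finrank L ↥T'' ≤ d := by
            have := Submodule.finrank_lt_finrank_of_lt hlt
            omega
          obtain ⟨T', h1, h2, h3⟩ := IHd T'' hr (lt_of_lt_of_le hpos hge)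
          exact ⟨T', h1.trans hlt.le, h2, h3⟩
  exact main (finrank L ↥T) T le_rfl hpos

lemma defect_FS (hF : ∀ i, F i = Submodule.span L (Us i : Set V)) (hFindep : iSupIndep F)
    (hUsup : (⨆ i, Us i) = U) (hUindep : iSupIndep Us)
    (hUdim : ∀ i, finrank K ↥(Us i) = ns i) (hFdim : ∀ i, finrank L ↥(F i) = ks i)
    (s : Finset (Fin t)) :
    defect U (bSup F s) = ∑ i ∈ s, ((ns i : ℤ) - ks i) := by
  have h1 : wt U (bSup F s) = ∑ i ∈ s, ns i := by
    rw [wt, U_inf_FS hF hFindep hUsup s, finrank_bSup hUindep]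
    exact Finset.sum_congr rfl fun i _ => hUdim i
  have h2 : finrank L ↥(bSup F s) = ∑ i ∈ s, ks i := by
    rw [finrank_bSup hFindep]
    exact Finset.sum_congr rfl fun i _ => hFdim i
  rw [defect, h1, h2, Finset.sum_sub_distrib]
  push_cast
  ring

lemma lemma_h1 (hks : ∀ i, 0 < ks i)
    (hF : ∀ i, F i = Submodule.span L (Us i : Set V)) (hFindep : iSupIndep F)
    (hFsup : (⨆ i, F i) = ⊤) (hUsup : (⨆ i, Us i) = U) (hUindep : iSupIndep Us)
    (hUdim : ∀ i, finrank K ↥(Us i) = ns i) (hFdim : ∀ i, finrank L ↥(F i) = ks i)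
    {k : ℕ} (hk : k = ∑ i, ks i)
    (hyp2 : ∀ H : Submodule L V, finrank L ↥H + 1 = k → (∀ i, ¬ F i ≤ H) →
      finrank K ↥(U ⊓ H.restrictScalars K) ≤ k - 1)
    (T : Submodule L V) (sT : Finset (Fin t)) (hsT : ∀ i, i ∈ sT ↔ F i ≤ T) :
    defect U T ≤ ∑ i ∈ sT, ((ns i : ℤ) - ks i) := by
  by_cases huniv : sT = Finset.univ
  · subst huniv
    have hTtop : T = bSup F Finset.univ := by
      apply le_antisymm
      · rw [bSup_univ, hFsup]; exact le_top
      · exact bSup_le fun i hi => (hsT i).mp hi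
    rw [hTtop]
    rw [defect_FS hF hFindep hUsup hUindep hUdim hFdim]
  · set c := Finset.univ \ sT with hcdef
    have hq_le_T : bSup F sT ≤ T := bSup_le fun j hj => (hsT j).mp hj
    have hcompl : IsCompl (bSup F c) (bSup F sT) := by
      constructor
      · exact hFindep.disjoint_bSup_bSup Finset.sdiff_disjoint
      · rw [codisjoint_iff, ← bSup_union]
        have hu : c ∪ sT = Finset.univ := by
          rw [hcdef, Finset.sdiff_union_self_eq_union]
          exact Finset.union_eq_left.mpr (Finset.subset_univ sT)
        rw [hu, bSup_univ, hFsup]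
    set π : V →ₗ[L] V := (bSup F c).subtype.comp
      (Submodule.projectionOnto _ _ hcompl) with hπdef
    have hπ_left : ∀ x (hx : x ∈ bSup F c), π x = x := by
      intro x hx
      have h8 := Submodule.projectionOnto_apply_left hcompl ⟨x, hx⟩
      simp only [hπdef, LinearMap.coe_comp, Function.comp_apply]
      exact congrArg Subtype.val h8
    have hπ_right : ∀ x ∈ bSup F sT, π x = 0 := by
      intro x hx
      have h8 := Submodule.projectionOnto_apply_of_mem_right hcompl hx
      simp only [hπdef, LinearMap.coe_comp, Function.comp_apply]
      rw [h8]
      rfl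
    have hπ_mem : ∀ x, π x ∈ bSup F c := by
      intro x
      simp only [hπdef, LinearMap.coe_comp, Function.comp_apply]
      exact (Submodule.projectionOnto _ _ hcompl x).2
    have hkerπ : LinearMap.ker π = bSup F sT := by
      rw [hπdef, LinearMap.ker_comp, Submodule.ker_subtype]
      exact Submodule.ker_projectionOnto hcompl
    have hπ_sub : ∀ x, x - π x ∈ bSup F sT := by
      intro x
      rw [← hkerπ, LinearMap.mem_ker, map_sub, hπ_left (π x) (hπ_mem x), sub_self]
    have hπ_U : ∀ x ∈ U, π x ∈ U := by
      intro x hx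
      have hsplit : bSup Us sT ⊔ bSup Us c = U := by
        rw [← bSup_union]
        have hu : sT ∪ c = Finset.univ := by
          rw [hcdef, Finset.union_sdiff_of_subset (Finset.subset_univ sT)]
        rw [hu, bSup_univ, hUsup]
      rcases Submodule.mem_sup.mp (hsplit ▸ hx) with ⟨a', ha', b', hb', rfl⟩
      rw [map_add, hπ_right a' (US_le_FS hF sT ha'), hπ_left b' (US_le_FS hF _ hb'), zero_add]
      exact US_le_U hUsup _ hb'
    set T3 := Submodule.map π T with hT3def
    have hT3_le_T : T3 ≤ T := by
      rintro x ⟨y, hy, rfl⟩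
      have h8 : y - π y ∈ T := hq_le_T (hπ_sub y)
      have h9 : π y = y - (y - π y) := by abel
      rw [h9]
      exact sub_mem hy h8
    have hT3_le_c : T3 ≤ bSup F c := by
      rintro x ⟨y, hy, rfl⟩
      exact hπ_mem y
    have hT3_free : ∀ j ∈ c, ¬ F j ≤ T3 := by
      intro j hj h
      rw [hcdef, Finset.mem_sdiff] at hj
      exact hj.2 ((hsT j).mpr (h.trans hT3_le_T))
    have hT3_wt := concl hks hF hFindep hFsup hUsup hFdim hk hyp2 c T3 hT3_le_c hT3_free
    have hLrn := aux_finrank_map_add π T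
    have hinfq : T ⊓ LinearMap.ker π = bSup F sT := by
      rw [hkerπ]
      exact inf_eq_right.mpr hq_le_T
    have hks_s : finrank L ↥(bSup F sT) = ∑ i ∈ sT, ks i := by
      rw [finrank_bSup hFindep]
      exact Finset.sum_congr rfl fun i _ => hFdim i
    have hns_s : finrank K ↥(bSup Us sT) = ∑ i ∈ sT, ns i := by
      rw [finrank_bSup hUindep]
      exact Finset.sum_congr rfl fun i _ => hUdim i
    rw [hinfq, hks_s, ← hT3def] at hLrn
    have hKrn := aux_finrank_map_add (π.restrictScalars K) (U ⊓ T.restrictScalars K)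
    have hinfK : (U ⊓ T.restrictScalars K) ⊓ LinearMap.ker (π.restrictScalars K)
        ≤ bSup Us sT := by
      rw [← U_inf_FS hF hFindep hUsup sT]
      rintro x ⟨⟨hxU, _⟩, hxk⟩
      refine ⟨hxU, ?_⟩
      have hxk2 : x ∈ LinearMap.ker π := hxk
      rw [hkerπ] at hxk2
      exact hxk2
    have hmapK : Submodule.map (π.restrictScalars K) (U ⊓ T.restrictScalars K)
        ≤ U ⊓ T3.restrictScalars K := by
      rintro x ⟨y, hy, rfl⟩
      obtain ⟨hyU, hyT⟩ := hy
      exact ⟨hπ_U y hyU, Submodule.mem_map_of_mem (f := π) hyT⟩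
    have hK1 := Submodule.finrank_mono hinfK
    have hK2 := Submodule.finrank_mono hmapK
    rw [hns_s] at hK1
    have key : wt U T + ∑ i ∈ sT, ks i ≤ finrank L ↥T + ∑ i ∈ sT, ns i := by
      rw [wt]; omega
    rw [defect, Finset.sum_sub_distrib]
    have key2 : ((wt U T : ℤ)) + ∑ i ∈ sT, (ks i : ℤ)
        ≤ (finrank L ↥T : ℤ) + ∑ i ∈ sT, (ns i : ℤ) := by exact_mod_cast key
    omega

end Config2

/-- Theorem 1.21: characterization of `𝐤`-scattered subspaces w.r.t. the hyperplanes. -/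
theorem statement5 {K L V : Type*} [Field K] [Field L] [Algebra K L]
    [Fintype K] [Fintype L]
    [AddCommGroup V] [Module K V] [Module L V] [IsScalarTower K L V]
    [FiniteDimensional L V]
    (m : ℕ) (hm : 0 < m) (hmL : Module.finrank K L = m)
    (t : ℕ) (ht : 0 < t) (ks ns : Fin t → ℕ)
    (hks : ∀ i, 0 < ks i) (hns : ∀ i, ks i < ns i)
    (k n : ℕ) (hk : k = ∑ i, ks i) (hn : n = ∑ i, ns i)
    (hkV : Module.finrank L V = k)
    (U : Submodule K V) (hUn : Module.finrank K ↥U = n)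
    (Us : Fin t → Submodule K V)
    (hUindep : iSupIndep Us) (hUsup : (⨆ i, Us i) = U)
    (hUdim : ∀ i, Module.finrank K ↥(Us i) = ns i)
    (F : Fin t → Submodule L V)
    (hF : ∀ i, F i = Submodule.span L ((Us i : Set V)))
    (hFindep : iSupIndep F) (hFsup : (⨆ i, F i) = ⊤)
    (hFdim : ∀ i, Module.finrank L ↥(F i) = ks i) :
    -- `U` is `𝐤`-scattered w.r.t. the hyperplanes (for this decomposition) iff
    -- the subspaces of positive defect that are minimal w.r.t. their defect are
    -- exactly the sums of some of the components `F_i`.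
    (((∀ i, ∀ H : Submodule L V, H ≤ F i → Module.finrank L ↥H + 1 = ks i →
          Module.finrank K ↥(Us i ⊓ H.restrictScalars K) ≤ ks i - 1) ∧
      (∀ H : Submodule L V, Module.finrank L ↥H + 1 = k →
          (∀ i, ¬ F i ≤ H) → wt U H ≤ k - 1)) ↔
      (∀ T : Submodule L V,
        (0 < defect U T ∧ IsMinimalWrtDefect U T) ↔
          ∃ s : Finset (Fin t), s.Nonempty ∧ T = ⨆ j ∈ s, F j)) := by
  classical
  haveI : FiniteDimensional K V := Module.Finite.trans L V
  have hk0 : 0 < k := by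
    haveI : Nonempty (Fin t) := ⟨⟨0, ht⟩⟩
    rw [hk]
    exact Finset.sum_pos (fun i _ => hks i) Finset.univ_nonempty
  constructor
  · rintro ⟨hyp1, hyp2⟩
    have hyp2' : ∀ H : Submodule L V, Module.finrank L ↥H + 1 = k → (∀ i, ¬ F i ≤ H) →
        Module.finrank K ↥(U ⊓ H.restrictScalars K) ≤ k - 1 := fun H h1 h2 => hyp2 H h1 h2
    intro T
    constructor
    · rintro ⟨hpos, hmin⟩
      set sT := Finset.univ.filter (fun i => F i ≤ T) with hsTdef
      have hsT : ∀ i, i ∈ sT ↔ F i ≤ T := fun i => by simp [hsTdef]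
      have hh1 := lemma_h1 hks hF hFindep hFsup hUsup hUindep hUdim hFdim hk hyp2' T sT hsT
      have hne : sT.Nonempty := by
        rw [Finset.nonempty_iff_ne_empty]
        intro h
        rw [h, Finset.sum_empty] at hh1
        omega
      have hqle : bSup F sT ≤ T := bSup_le fun j hj => (hsT j).mp hj
      have hdf := defect_FS hF hFindep hUsup hUindep hUdim hFdim sT
      have heq : T = bSup F sT := by
        by_contra hne2
        have hlt : bSup F sT < T := lt_of_le_of_ne hqle (fun h => hne2 h.symm)
        have := hmin _ hlt
        omega
      exact ⟨sT, hne, heq⟩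
    · rintro ⟨s, hs, rfl⟩
      have hdf := defect_FS hF hFindep hUsup hUindep hUdim hFdim s
      have hbd : (⨆ j ∈ s, F j) = bSup F s := rfl
      rw [hbd]
      have hpos : 0 < defect U (bSup F s) := by
        rw [hdf]
        refine Finset.sum_pos (fun i _ => ?_) hs
        have := hns i
        omega
      refine ⟨hpos, ?_⟩
      intro T' hlt
      set sT' := Finset.univ.filter (fun i => F i ≤ T') with hsT'def
      have hsT' : ∀ i, i ∈ sT' ↔ F i ≤ T' := fun i => by simp [hsT'def]
      have hh1 := lemma_h1 hks hF hFindep hFsup hUsup hUindep hUdim hFdim hk hyp2' T' sT' hsT'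
      have hsub : sT' ⊆ s := by
        intro j hj
        have hjle : F j ≤ T' := (hsT' j).mp hj
        by_contra hjs
        have hdisj : Disjoint (F j) (bSup F s) := hFindep.disjoint_bSup hjs
        have hle2 : F j ≤ bSup F s := hjle.trans hlt.le
        have hbot : F j = ⊥ := hdisj.eq_bot_of_le hle2
        have h9 := hFdim j
        rw [hbot] at h9
        simp at h9
        have := hks j
        omega
      have hssne : sT' ≠ s := by
        intro h
        have h2 : bSup F s ≤ T' := bSup_le fun j hj => (hsT' j).mp (h ▸ hj)
        exact absurd (lt_of_lt_of_le hlt h2) (lt_irrefl T')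
      obtain ⟨j0, hj0s, hj0n⟩ := Finset.exists_of_ssubset (hsub.ssubset_of_ne hssne)
      have hstrict : ∑ i ∈ sT', ((ns i : ℤ) - ks i) < ∑ i ∈ s, ((ns i : ℤ) - ks i) :=
        Finset.sum_lt_sum_of_subset hsub hj0s hj0n (by have := hns j0; omega)
          (fun i _ _ => by have := hns i; omega)
      omega
  · intro hRHS
    constructor
    · intro i H hHle hHrank
      by_contra hcon
      push_neg at hcon
      have hUsle : Us i ⊓ H.restrictScalars K ≤ U ⊓ H.restrictScalars K :=
        inf_le_inf_right _ (hUsup ▸ le_iSup Us i)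
      have hw := Submodule.finrank_mono hUsle
      have hdpos : 0 < defect U H := by
        rw [defect, wt]
        have := hks i
        omega
      obtain ⟨T', hT'le, hT'pos, hT'min⟩ := minexists U H hdpos
      obtain ⟨s, hsne, hTeq⟩ := (hRHS T').mp ⟨hT'pos, hT'min⟩
      obtain ⟨j, hj⟩ := hsne
      have hFj : F j ≤ T' := by rw [hTeq]; exact le_bSup F hj
      have hFjH : F j ≤ H := hFj.trans hT'le
      by_cases hji : j = i
      · subst hji
        have h10 := Submodule.finrank_mono hFjH
        rw [hFdim j] at h10
        omega
      · have hdisj : Disjoint (F j) (bSup F ({i} : Finset (Fin t))) :=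
          hFindep.disjoint_bSup (by simp [hji])
        rw [bSup_singleton] at hdisj
        have hbot : F j = ⊥ := hdisj.eq_bot_of_le (hFjH.trans hHle)
        have h9 := hFdim j
        rw [hbot] at h9
        simp at h9
        have := hks j
        omega
    · intro H hHrank hHfree
      by_contra hcon
      push_neg at hcon
      have hdpos : 0 < defect U H := by
        rw [defect]
        omega
      obtain ⟨T', hT'le, hT'pos, hT'min⟩ := minexists U H hdpos
      obtain ⟨s, hsne, hTeq⟩ := (hRHS T').mp ⟨hT'pos, hT'min⟩
      obtain ⟨j, hj⟩ := hsne
      have hFj : F j ≤ T' := by rw [hTeq]; exact le_bSup F hj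
      exact hHfree j (hFj.trans hT'le)
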